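/- In a valid experiment graph G, let u be a vertex incident to an edge e = {u,v} with d(u,c(e)) = 1 and d(v,c(e)) ≥ 2, and let G' be obtained from G by deleting every edge e' ≠ e incident on v with c(e',v) = c(e). Then every vertex colouring feasible in G' has the same weight in G' as in G, and consequently G' is a valid experiment graph with μ(G') = μ(G). -/

import Mathlib

open scoped Classical

noncomputable section

/-- An experiment graph: a finite simple graph with complex edge weights
(nonzero on edges) and, for each edge, a colour at each endpoint:
`col a b` is the colour of the edge `{a,b}` at the endpoint `a`. -/
structure ExpGraph (V : Type) [Fintype V] [DecidableEq V] (μ : ℕ) where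
  G : SimpleGraph V
  w : Sym2 V → ℂ
  w_ne : ∀ e ∈ G.edgeSet, w e ≠ 0
  col : V → V → Fin μ

namespace ExpGraph

variable {V : Type} [Fintype V] [DecidableEq V] {μ : ℕ}

/-- `m` encodes a perfect matching: a fixed-point-free involution matching
each vertex to an adjacent vertex. -/
def IsPM (E : ExpGraph V μ) (m : V → V) : Prop :=
  ∀ x, E.G.Adj x (m x) ∧ m (m x) = x

/-- The product of the weights of the edges of the perfect matching `m`. -/
def matchWeight (E : ExpGraph V μ) (m : V → V) : ℂ :=
  (Finset.univ.image fun x => s(x, m x)).prod E.w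

/-- The perfect matching `m` induces the vertex colouring `vc`. -/
def Induces (E : ExpGraph V μ) (m : V → V) (vc : V → Fin μ) : Prop :=
  ∀ x, E.col x (m x) = vc x

/-- The weight of a vertex colouring: the sum, over all perfect matchings
inducing it, of the product of the weights of the matching edges. -/
def weight (E : ExpGraph V μ) (vc : V → Fin μ) : ℂ :=
  ∑ m ∈ Finset.univ.filter (fun m : V → V => E.IsPM m ∧ E.Induces m vc),
    E.matchWeight m

/-- A valid experiment graph: each monochromatic vertex colouring has
weight 1 and all other vertex colourings have weight 0. -/
def Valid (E : ExpGraph V μ) : Prop :=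
  (∀ i : Fin μ, E.weight (fun _ => i) = 1) ∧
  (∀ vc : V → Fin μ, (∀ i : Fin μ, vc ≠ fun _ => i) → E.weight vc = 0)

/-- Number of edges. -/
def edgeCount (E : ExpGraph V μ) : ℕ := E.G.edgeSet.ncard

/-- The colour degree `d(x,i)`: number of edges incident on `x` whose colour at `x` is `i`. -/
def colDeg (E : ExpGraph V μ) (x : V) (i : Fin μ) : ℕ :=
  (Finset.univ.filter fun y => E.G.Adj x y ∧ E.col x y = i).card

/-- Edge-minimum valid experiment graph: valid, and no valid experiment graph
with the same number of vertices and the same dimension has fewer edges. -/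
def EdgeMin (E : ExpGraph V μ) : Prop :=
  E.Valid ∧ ∀ (V' : Type) [Fintype V'] [DecidableEq V'] (E' : ExpGraph V' μ),
    E'.Valid → Fintype.card V' = Fintype.card V → E.edgeCount ≤ E'.edgeCount

/-- The edge `{x,y}` is colour isolated of colour `i`: it is monochromatic of colour `i`
and `d(x,i) = d(y,i) = 1`. -/
def ColIso (E : ExpGraph V μ) (x y : V) (i : Fin μ) : Prop :=
  E.G.Adj x y ∧ E.col x y = i ∧ E.col y x = i ∧ E.colDeg x i = 1 ∧ E.colDeg y i = 1

end ExpGraph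

/-- The graph obtained from `E` by deleting every edge `e' ≠ {u,v}` incident on
`v` whose colour at `v` equals `c(e) = col u v`. -/
noncomputable def ExpGraph.pruneAt {V : Type} [Fintype V] [DecidableEq V] {μ : ℕ}
    (E : ExpGraph V μ) (u v : V) : ExpGraph V μ where
  G :=
    { Adj := fun a b => E.G.Adj a b ∧
        ¬(a = v ∧ E.col v b = E.col u v ∧ b ≠ u) ∧
        ¬(b = v ∧ E.col v a = E.col u v ∧ a ≠ u)
      symm := by
        constructor
        rintro a b ⟨hab, h1, h2⟩
        exact ⟨hab.symm, h2, h1⟩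
      loopless := ⟨fun a h => E.G.loopless.irrefl a h.1⟩ }
  w := E.w
  w_ne := by
    intro e he
    induction e using Sym2.ind with
    | _ a b =>
      exact E.w_ne _ ((SimpleGraph.mem_edgeSet E.G).mpr
        ((SimpleGraph.mem_edgeSet _).mp he).1)
  col := E.col

/-- in a valid experiment graph, if `e = {u,v}` satisfies
`d(u, c(e)) = 1` and `d(v, c(e)) ≥ 2`, and `G'` is obtained by deleting every
edge `e' ≠ e` incident on `v` with `c(e',v) = c(e)`, then every vertex colouring
feasible in `G'` has the same weight in `G'` as in `G`, and `G'` is a valid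
experiment graph (of the same dimension `μ`). -/
theorem prune_at_valid
    {V : Type} [Fintype V] [DecidableEq V] {μ : ℕ}
    (E : ExpGraph V μ) (hV : E.Valid) (u v : V) (huv : E.G.Adj u v)
    (hdu : E.colDeg u (E.col u v) = 1) (hdv : 2 ≤ E.colDeg v (E.col u v)) :
    (∀ vc : V → Fin μ,
        (∃ m, (E.pruneAt u v).IsPM m ∧ (E.pruneAt u v).Induces m vc) →
        (E.pruneAt u v).weight vc = E.weight vc) ∧
      (E.pruneAt u v).Valid := by
  classical
  set G' := E.pruneAt u v with hG'
  -- v is the unique neighbour of u with colour c(e) at u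
  have hA : ∀ y, E.G.Adj u y → E.col u y = E.col u v → y = v := by
    intro y hy hcy
    have h1 := Finset.card_le_one.mp hdu.le
    exact h1 y (Finset.mem_filter.mpr ⟨Finset.mem_univ _, hy, hcy⟩)
      v (Finset.mem_filter.mpr ⟨Finset.mem_univ _, huv, rfl⟩)
  -- a PM of G not a PM of G' forces vc v = c(e) and vc u ≠ c(e)
  have hkey : ∀ (m : V → V) (vc : V → Fin μ), E.IsPM m → E.Induces m vc →
      ¬ G'.IsPM m → vc v = E.col u v ∧ vc u ≠ E.col u v := by
    intro m vc hpm hind hnot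
    have hex : ∃ x, ¬ G'.G.Adj x (m x) := by
      by_contra h
      push_neg at h
      exact hnot (fun x => ⟨h x, (hpm x).2⟩)
    obtain ⟨x, hnadj⟩ := hex
    have hmm := (hpm x).2
    have hadj := (hpm x).1
    have hcase : (x = v ∧ E.col v (m x) = E.col u v ∧ m x ≠ u) ∨
        (m x = v ∧ E.col v x = E.col u v ∧ x ≠ u) := by
      by_contra hcon
      exact hnadj ⟨hadj, fun h => hcon (Or.inl h), fun h => hcon (Or.inr h)⟩
    have hb : E.col v (m v) = E.col u v ∧ m v ≠ u := by
      rcases hcase with ⟨h1, h2, h3⟩ | ⟨h1, h2, h3⟩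
      · subst h1; exact ⟨h2, h3⟩
      · have hx' : m v = x := by rw [← h1, hmm]
        rw [hx']; exact ⟨h2, h3⟩
    have hvv : vc v = E.col u v := by rw [← hind v, hb.1]
    have hmu : m u ≠ v := by
      intro h
      exact hb.2 (by rw [← h, (hpm u).2])
    refine ⟨hvv, ?_⟩
    rw [← hind u]
    intro h
    exact hmu (hA _ (hpm u).1 h)
  -- colourings with vc v = c(e), vc u ≠ c(e) are infeasible in G'
  have hinf : ∀ (vc : V → Fin μ), vc v = E.col u v → vc u ≠ E.col u v →
      ¬ ∃ m, G'.IsPM m ∧ G'.Induces m vc := by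
    rintro vc h1 h2 ⟨m, hpm, hind⟩
    have hadj := (hpm v).1
    have hcm : E.col v (m v) = E.col u v := by
      have : E.col v (m v) = vc v := hind v
      rw [this, h1]
    have hmv : m v = u := by
      by_contra hne
      exact hadj.2.1 ⟨rfl, hcm, hne⟩
    have hmu : m u = v := by rw [← hmv, (hpm v).2]
    apply h2
    have : E.col u (m u) = vc u := hind u
    rw [← this, hmu]
  -- for feasible colourings, the matching sets coincide
  have hfilter : ∀ vc : V → Fin μ, (∃ m, G'.IsPM m ∧ G'.Induces m vc) →
      (Finset.univ.filter (fun m : V → V => G'.IsPM m ∧ G'.Induces m vc))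
        = Finset.univ.filter (fun m : V → V => E.IsPM m ∧ E.Induces m vc) := by
    intro vc hfeas
    ext m
    simp only [Finset.mem_filter, Finset.mem_univ, true_and]
    constructor
    · rintro ⟨hpm, hind⟩
      exact ⟨fun x => ⟨(hpm x).1.1, (hpm x).2⟩, hind⟩
    · rintro ⟨hpm, hind⟩
      refine ⟨?_, hind⟩
      by_contra hnot
      obtain ⟨h1, h2⟩ := hkey m vc hpm hind hnot
      exact hinf vc h1 h2 hfeas
  have hweq : ∀ vc : V → Fin μ, (∃ m, G'.IsPM m ∧ G'.Induces m vc) →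
      G'.weight vc = E.weight vc := by
    intro vc hfeas
    unfold ExpGraph.weight
    rw [hfilter vc hfeas]
    rfl
  refine ⟨hweq, ?_, ?_⟩
  · intro i
    have hfeas : ∃ m, G'.IsPM m ∧ G'.Induces m (fun _ => i) := by
      by_contra hno
      push_neg at hno
      have hempty : (Finset.univ.filter
          (fun m : V → V => E.IsPM m ∧ E.Induces m (fun _ => i))) = ∅ := by
        ext m
        simp only [Finset.mem_filter, Finset.mem_univ, true_and,
          Finset.notMem_empty, iff_false]
        rintro ⟨hpm, hind⟩
        by_cases hg : G'.IsPM m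
        · exact hno m hg hind
        · obtain ⟨hv1, hv2⟩ := hkey m _ hpm hind hg
          exact hv2 hv1
      have h1 := hV.1 i
      rw [ExpGraph.weight, hempty, Finset.sum_empty] at h1
      exact zero_ne_one h1
    rw [hweq _ hfeas]
    exact hV.1 i
  · intro vc hvc
    by_cases hfeas : ∃ m, G'.IsPM m ∧ G'.Induces m vc
    · rw [hweq _ hfeas]
      exact hV.2 vc hvc
    · push_neg at hfeas
      have hempty : (Finset.univ.filter
          (fun m : V → V => G'.IsPM m ∧ G'.Induces m vc)) = ∅ := by
        ext m
        simp only [Finset.mem_filter, Finset.mem_univ, true_and,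
          Finset.notMem_empty, iff_false]
        rintro ⟨hpm, hind⟩
        exact hfeas m hpm hind
      rw [ExpGraph.weight, hempty, Finset.sum_empty]
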